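/- Let d ≥ 2 and 0 < α < π/2. Define C_1(α) = 1 and, for i ≥ 2, C_i(α) = 1/sin α + cos α/(sin α)^{i−1} + cos α (1 − (sin α)^{i−2})/((sin α)^{i−1}(1 − sin α)). Define F_d(α) = C_d(α) and F_i(α) = (1 + C_i(α)/cos α) · F_{i+1}(α) for 1 ≤ i < d. Then F_1(α) ≤ (1 + cos α) · ((2 − sin α)/(1 − sin α))^{d−1} · (sin α)^{−d(d−1)/2}. -/

import Mathlib

open Real

/-- `C α i` : the bound `C_i(α)` on curve-length ratios, with `C_1(α) = 1`. -/
noncomputable def C (α : ℝ) (i : ℕ) : ℝ :=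
  if i ≤ 1 then 1
  else 1 / Real.sin α + Real.cos α / (Real.sin α) ^ (i - 1) +
    Real.cos α * (1 - (Real.sin α) ^ (i - 2)) /
      ((Real.sin α) ^ (i - 1) * (1 - Real.sin α))

/-- `F α d i` : defined by downward recursion `F_d = C_d`,
`F_i = (1 + C_i/cos α) · F_{i+1}` for `i < d`. -/
noncomputable def F (α : ℝ) (d : ℕ) : ℕ → ℝ := fun i =>
  if h : d ≤ i then C α d
  else (1 + C α i / Real.cos α) * F α d (i + 1)
termination_by i => d - i
decreasing_by omega

/-- The per-step bound `B_j = (2-s)/(1-s) · (1/s)^(j-1)`. -/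
noncomputable def Bnd (α : ℝ) (j : ℕ) : ℝ :=
  (2 - Real.sin α) / (1 - Real.sin α) * (1 / Real.sin α) ^ (j - 1)

lemma sum_aux (d : ℕ) (hd : 2 ≤ d) :
    ∑ j ∈ Finset.Icc 2 d, (j - 1) = d * (d - 1) / 2 := by
  have h2 : (∑ j ∈ Finset.Icc 2 d, (j - 1)) * 2 = d * (d - 1) := by
    induction d, hd using Nat.le_induction with
    | base => decide
    | succ d hd ih =>
      rw [Finset.sum_Icc_succ_top (by omega : 2 ≤ d + 1)]
      obtain ⟨m, rfl⟩ := Nat.exists_eq_add_of_le hd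
      simp only [show 2 + m - 1 = m + 1 from by omega,
        show 2 + m + 1 - 1 = 2 + m from by omega] at ih ⊢
      nlinarith [ih]
  rw [← h2]
  omega

/-- Basic trig facts for `0 < α < π/2`. -/
lemma trig_facts {α : ℝ} (h0 : 0 < α) (h1 : α < π / 2) :
    0 < Real.sin α ∧ Real.sin α < 1 ∧ 0 < Real.cos α := by
  have hpi : (0:ℝ) < π := Real.pi_pos
  have hs : 0 < Real.sin α := Real.sin_pos_of_pos_of_lt_pi h0 (by linarith)
  have hc : 0 < Real.cos α := Real.cos_pos_of_mem_Ioo ⟨by linarith, h1⟩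
  have hid := Real.sin_sq_add_cos_sq α
  exact ⟨hs, by nlinarith, hc⟩

/-- Core abstract inequality. -/
lemma core {s c : ℝ} (hs : 0 < s) (hs1 : s < 1) (hc : 0 < c)
    (hid : s ^ 2 + c ^ 2 = 1) (k : ℕ) :
    1 + (1 / s + c / s ^ (k + 1) + c * (1 - s ^ k) / (s ^ (k + 1) * (1 - s))) / c
      ≤ (2 - s) / (1 - s) * (1 / s) ^ (k + 1) := by
  have h1s : 0 < 1 - s := by linarith
  have hcle : c ≤ 1 := by nlinarith
  have hX : (0:ℝ) ≤ c - c * s * (1 - s) - (1 - s) := by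
    have hX2 : c - c * s * (1 - s) - (1 - s) = c * (1 + s ^ 3 - c) / (1 + s) := by
      rw [eq_div_iff (by linarith : (1:ℝ) + s ≠ 0)]
      linear_combination hid
    rw [hX2]
    exact div_nonneg (mul_nonneg hc.le (by nlinarith)) (by linarith)
  rw [← sub_nonneg]
  have key : (2 - s) / (1 - s) * (1 / s) ^ (k + 1) -
      (1 + (1 / s + c / s ^ (k + 1) + c * (1 - s ^ k) / (s ^ (k + 1) * (1 - s))) / c)
      = (c - c * s * (1 - s) - (1 - s)) / (c * s * (1 - s)) := by
    rw [one_div_pow]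
    field_simp
    ring
  rw [key]
  exact div_nonneg hX (by positivity)

lemma step_bound {α : ℝ} (h0 : 0 < α) (h1 : α < π / 2) {i : ℕ} (hi : 2 ≤ i) :
    1 + C α i / Real.cos α ≤ Bnd α i := by
  obtain ⟨hs, hs1, hc⟩ := trig_facts h0 h1
  obtain ⟨k, rfl⟩ := Nat.exists_eq_add_of_le hi
  have e1 : 2 + k - 1 = k + 1 := by omega
  have e2 : 2 + k - 2 = k := by omega
  rw [C, if_neg (by omega), Bnd, e1, e2]
  exact core hs hs1 hc (by rw [Real.sin_sq_add_cos_sq]) k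

lemma C_pos {α : ℝ} (h0 : 0 < α) (h1 : α < π / 2) (i : ℕ) : 0 < C α i := by
  obtain ⟨hs, hs1, hc⟩ := trig_facts h0 h1
  rw [C]
  split
  · norm_num
  · have h3 : (0:ℝ) ≤ Real.cos α * (1 - Real.sin α ^ (i - 2)) /
        (Real.sin α ^ (i - 1) * (1 - Real.sin α)) := by
      apply div_nonneg
      · exact mul_nonneg hc.le (by nlinarith [pow_le_one₀ hs.le hs1.le (n := i - 2)])
      · have : (0:ℝ) < 1 - Real.sin α := by linarith
        positivity
    have h1' : (0:ℝ) < 1 / Real.sin α := by positivity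
    have h2' : (0:ℝ) < Real.cos α / Real.sin α ^ (i - 1) := by positivity
    linarith

lemma Bnd_pos {α : ℝ} (h0 : 0 < α) (h1 : α < π / 2) (i : ℕ) : 0 < Bnd α i := by
  obtain ⟨hs, hs1, hc⟩ := trig_facts h0 h1
  have : (0:ℝ) < 1 - Real.sin α := by linarith
  rw [Bnd]
  have : (0:ℝ) < 2 - Real.sin α := by linarith
  positivity

lemma Cd_bound {α : ℝ} (h0 : 0 < α) (h1 : α < π / 2) {i : ℕ} (hi : 2 ≤ i) :
    C α i ≤ Real.cos α * Bnd α i := by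
  obtain ⟨hs, hs1, hc⟩ := trig_facts h0 h1
  have h := step_bound h0 h1 hi
  have : C α i = Real.cos α * (C α i / Real.cos α) := by field_simp
  rw [this]
  apply mul_le_mul_of_nonneg_left _ hc.le
  linarith

lemma F_pos {α : ℝ} (h0 : 0 < α) (h1 : α < π / 2) (d : ℕ) : ∀ i, 0 < F α d i := by
  obtain ⟨hs, hs1, hc⟩ := trig_facts h0 h1
  have key : ∀ n i, d - i ≤ n → 0 < F α d i := by
    intro n
    induction n with
    | zero =>
      intro i hi
      rw [F, dif_pos (by omega)]
      exact C_pos h0 h1 d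
    | succ n ih =>
      intro i hi
      by_cases h : d ≤ i
      · rw [F, dif_pos h]; exact C_pos h0 h1 d
      · rw [F, dif_neg h]
        have hC := C_pos h0 h1 i
        have : 0 < C α i / Real.cos α := div_pos hC hc
        exact mul_pos (by linarith) (ih (i + 1) (by omega))
  intro i; exact key (d - i) i le_rfl

lemma F_le {α : ℝ} (h0 : 0 < α) (h1 : α < π / 2) (d : ℕ) (hd : 2 ≤ d) :
    ∀ n i, 2 ≤ i → i + n = d →
      F α d i ≤ Real.cos α * ∏ j ∈ Finset.Icc i d, Bnd α j := by
  obtain ⟨hs, hs1, hc⟩ := trig_facts h0 h1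
  intro n
  induction n with
  | zero =>
    intro i h2 hid
    have : i = d := by omega
    subst this
    rw [F, dif_pos le_rfl, Finset.Icc_self, Finset.prod_singleton]
    exact Cd_bound h0 h1 h2
  | succ n ih =>
    intro i h2 hid
    have hilt : i < d := by omega
    rw [F, dif_neg (by omega)]
    have hstep := step_bound h0 h1 h2
    have hFpos := (F_pos h0 h1 d (i + 1)).le
    have hih := ih (i + 1) (by omega) (by omega)
    have hins : Finset.Icc i d = insert i (Finset.Icc (i + 1) d) := by
      rw [Finset.Icc_add_one_left_eq_Ioc, Finset.Ioc_insert_left hilt.le]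
    rw [hins, Finset.prod_insert (by simp)]
    calc (1 + C α i / Real.cos α) * F α d (i + 1)
        ≤ Bnd α i * (Real.cos α * ∏ j ∈ Finset.Icc (i + 1) d, Bnd α j) :=
          mul_le_mul hstep hih hFpos (Bnd_pos h0 h1 i).le
      _ = Real.cos α * (Bnd α i * ∏ j ∈ Finset.Icc (i + 1) d, Bnd α j) := by ring

theorem F_one_upper_bound (d : ℕ) (hd : 2 ≤ d) (α : ℝ) (h0 : 0 < α) (h1 : α < π / 2) :
    F α d 1 ≤ (1 + Real.cos α) * ((2 - Real.sin α) / (1 - Real.sin α)) ^ (d - 1) /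
      (Real.sin α) ^ (d * (d - 1) / 2) := by
  obtain ⟨hs, hs1, hc⟩ := trig_facts h0 h1
  have hC1 : C α 1 = 1 := by rw [C, if_pos le_rfl]
  have h2 := F_le h0 h1 d hd (d - 2) 2 le_rfl (by omega)
  have hprod : ∏ j ∈ Finset.Icc 2 d, Bnd α j
      = ((2 - Real.sin α) / (1 - Real.sin α)) ^ (d - 1) /
        (Real.sin α) ^ (d * (d - 1) / 2) := by
    simp only [Bnd]
    rw [Finset.prod_mul_distrib, Finset.prod_const, Finset.prod_pow_eq_pow_sum,
      Nat.card_Icc, sum_aux d hd]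
    rw [show d + 1 - 2 = d - 1 from by omega, one_div, inv_pow, div_eq_mul_inv]
    ring
  rw [F, dif_neg (by omega), hC1]
  rw [hprod] at h2
  have hFpos := (F_pos h0 h1 d 2).le
  have key : ∀ X : ℝ, (1 + 1 / Real.cos α) * (Real.cos α * X) = (1 + Real.cos α) * X := by
    intro X
    field_simp [hc.ne']
    ring
  calc (1 + 1 / Real.cos α) * F α d 2
      ≤ (1 + 1 / Real.cos α) * (Real.cos α *
          (((2 - Real.sin α) / (1 - Real.sin α)) ^ (d - 1) /
            (Real.sin α) ^ (d * (d - 1) / 2))) := by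
        apply mul_le_mul_of_nonneg_left h2 (by positivity)
    _ = (1 + Real.cos α) * (((2 - Real.sin α) / (1 - Real.sin α)) ^ (d - 1) /
          (Real.sin α) ^ (d * (d - 1) / 2)) := key _
    _ = (1 + Real.cos α) * ((2 - Real.sin α) / (1 - Real.sin α)) ^ (d - 1) /
          (Real.sin α) ^ (d * (d - 1) / 2) := (mul_div_assoc _ _ _).symm
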